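/- On any interval I ⊂ R of length s > 0, the average value of log⁺(|x|^{-1}) is at most 1 − log(s/2) if s < 2, and at most 2/s if s ≥ 2. -/

import Mathlib

open Real MeasureTheory intervalIntegral Set

noncomputable def fLP (x : ℝ) : ℝ := max (Real.log |x|⁻¹) 0

lemma fLP_nonneg (x : ℝ) : 0 ≤ fLP x := le_max_right _ _

lemma fLP_eq_of_pos {x : ℝ} (hx : 0 < x) : fLP x = max (-Real.log x) 0 := by
  rw [fLP, abs_of_pos hx, Real.log_inv]

lemma fLP_even (x : ℝ) : fLP (-x) = fLP x := by
  simp [fLP, abs_neg]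

lemma fLP_bound {x : ℝ} (hx : x ≠ 0) : fLP x ≤ 3 * |x| ^ (-(1/3) : ℝ) := by
  have h1 : 0 < |x| := abs_pos.mpr hx
  have h2 : (0:ℝ) < |x| ^ (-(1/3) : ℝ) := rpow_pos_of_pos h1 _
  rw [fLP, Real.log_inv]
  refine max_le ?_ (by positivity)
  have h3 : Real.log (|x| ^ (-(1/3) : ℝ)) = (-(1/3)) * Real.log |x| := Real.log_rpow h1 _
  have h4 : Real.log (|x| ^ (-(1/3) : ℝ)) ≤ |x| ^ (-(1/3) : ℝ) - 1 :=
    Real.log_le_sub_one_of_pos h2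
  nlinarith [h2]

lemma fLP_anti {x y : ℝ} (hx : 0 < x) (hxy : x ≤ y) : fLP y ≤ fLP x := by
  rw [fLP_eq_of_pos hx, fLP_eq_of_pos (lt_of_lt_of_le hx hxy)]
  exact max_le_max (neg_le_neg (Real.log_le_log hx hxy)) le_rfl

lemma fLP_meas : Measurable fLP := by
  unfold fLP; measurability

lemma ae_ne_zero : ∀ᵐ x : ℝ, x ≠ 0 := by
  rw [ae_iff]
  simp only [ne_eq, not_not]
  have : {x : ℝ | x = 0} = {0} := by ext x; simp
  rw [this]
  exact measure_singleton 0

lemma fLP_intble (a b : ℝ) : IntervalIntegrable fLP volume a b := by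
  have hg : IntervalIntegrable (fun x : ℝ => x ^ (-(1/3) : ℝ)) volume a b :=
    intervalIntegrable_rpow' (by norm_num)
  have hg6 : IntervalIntegrable (fun x : ℝ => 6 * x ^ (-(1/3) : ℝ)) volume a b :=
    hg.const_mul 6
  refine hg6.mono_fun' (fLP_meas.aestronglyMeasurable.restrict) ?_
  filter_upwards [ae_restrict_of_ae ae_ne_zero] with x hx
  have hb := fLP_bound hx
  have h1 : 0 < |x| := abs_pos.mpr hx
  have h2 : (0:ℝ) < |x| ^ (-(1/3) : ℝ) := rpow_pos_of_pos h1 _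
  have hnorm : ‖fLP x‖ = fLP x := abs_of_nonneg (fLP_nonneg x)
  rw [hnorm]
  rcases hx.lt_or_gt with hneg | hpos
  · have hcos : Real.cos ((-(1/3) : ℝ) * π) = 1/2 := by
      have : ((-(1/3) : ℝ) * π) = -(π/3) := by ring
      rw [this, Real.cos_neg, Real.cos_pi_div_three]
    have habs : |x| = -x := abs_of_neg hneg
    have hlog : Real.log x = Real.log |x| := (Real.log_abs x).symm
    have hxr : x ^ (-(1/3) : ℝ) = |x| ^ (-(1/3) : ℝ) * (1/2) := by
      rw [Real.rpow_def_of_neg hneg, hcos, Real.rpow_def_of_pos h1, hlog]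
    rw [hxr]
    linarith
  · have : x ^ (-(1/3) : ℝ) = |x| ^ (-(1/3) : ℝ) := by rw [abs_of_pos hpos]
    rw [this]
    linarith

lemma H_val {r : ℝ} (h0 : 0 ≤ r) (h1 : r ≤ 1) :
    ∫ x in (0:ℝ)..r, fLP x = r - r * Real.log r := by
  have key : ∫ x in (0:ℝ)..r, fLP x =
      (fun x : ℝ => x - x * Real.log x) r - (fun x : ℝ => x - x * Real.log x) 0 := by
    apply intervalIntegral.integral_eq_sub_of_hasDeriv_right_of_le h0
    · exact (continuous_id.sub Real.continuous_mul_log).continuousOn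
    · intro x hx
      have hx0 : 0 < x := hx.1
      have hx1 : x < 1 := lt_of_lt_of_le hx.2 h1
      have hd : HasDerivAt (fun y : ℝ => y - y * Real.log y) (1 - (Real.log x + 1)) x :=
        (hasDerivAt_id x).sub (Real.hasDerivAt_mul_log hx0.ne')
      have hf : fLP x = 1 - (Real.log x + 1) := by
        rw [fLP_eq_of_pos hx0, max_eq_left (by nlinarith [Real.log_nonpos hx0.le hx1.le])]
        ring
      rw [hf]
      exact hd.hasDerivWithinAt
    · exact fLP_intble 0 r
  simpa using key

lemma H_tail {r : ℝ} (h1 : 1 ≤ r) : ∫ x in (1:ℝ)..r, fLP x = 0 := by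
  have : EqOn fLP (fun _ => (0:ℝ)) (Set.uIcc 1 r) := by
    intro x hx
    rw [Set.uIcc_of_le h1] at hx
    have hx1 : (1:ℝ) ≤ x := hx.1
    have hx0 : 0 < x := lt_of_lt_of_le zero_lt_one hx1
    rw [fLP_eq_of_pos hx0]
    simp only [max_eq_right_iff]
    simpa using Real.log_nonneg hx1
  rw [intervalIntegral.integral_congr this]
  simp

lemma H_mono {u v : ℝ} (hu : 0 ≤ u) (huv : u ≤ v) :
    ∫ x in (0:ℝ)..u, fLP x ≤ ∫ x in (0:ℝ)..v, fLP x := by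
  have hadd := intervalIntegral.integral_add_adjacent_intervals
    (fLP_intble 0 u) (fLP_intble u v)
  have hnn : 0 ≤ ∫ x in u..v, fLP x :=
    intervalIntegral.integral_nonneg huv (fun x _ => fLP_nonneg x)
  linarith

lemma H_eq_min {r : ℝ} (hr : 0 ≤ r) :
    ∫ x in (0:ℝ)..r, fLP x = min r 1 - min r 1 * Real.log (min r 1) := by
  rcases le_total r 1 with h | h
  · rw [min_eq_left h]; exact H_val hr h
  · rw [min_eq_right h]
    have hadd := intervalIntegral.integral_add_adjacent_intervals
      (fLP_intble 0 1) (fLP_intble 1 r)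
    rw [H_tail h] at hadd
    rw [← hadd, add_zero, H_val zero_le_one le_rfl]

lemma H_cap {r : ℝ} (hr : 0 ≤ r) : ∫ x in (0:ℝ)..r, fLP x ≤ 1 := by
  rw [H_eq_min hr]
  have h1 : 0 ≤ min r 1 := le_min hr zero_le_one
  have h2 : min r 1 ≤ 1 := min_le_right r 1
  rcases eq_or_lt_of_le h1 with h | h
  · rw [← h]; norm_num
  · have h5 : Real.log (min r 1)⁻¹ ≤ (min r 1)⁻¹ - 1 :=
      Real.log_le_sub_one_of_pos (inv_pos.2 h)
    rw [Real.log_inv] at h5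
    have h6 : min r 1 * (min r 1)⁻¹ = 1 := mul_inv_cancel₀ h.ne'
    nlinarith

lemma refl_eq (a b : ℝ) : ∫ x in a..b, fLP x = ∫ x in (-b)..(-a), fLP x := by
  have h := intervalIntegral.integral_comp_neg (a := -b) (b := -a) fLP
  simp only [neg_neg] at h
  rw [← h]
  exact intervalIntegral.integral_congr fun x _ => fLP_even x

lemma shift {c r : ℝ} (hc : 0 ≤ c) (hr : 0 ≤ r) :
    ∫ x in c..(c + r), fLP x ≤ ∫ x in (0:ℝ)..r, fLP x := by
  have h1 : ∫ x in (0:ℝ)..r, fLP (x + c) = ∫ x in c..(c + r), fLP x := by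
    rw [intervalIntegral.integral_comp_add_right]
    norm_num [add_comm]
  rw [← h1]
  have hint : IntervalIntegrable (fun x => fLP (x + c)) volume 0 r := by
    have := (fLP_intble c (c + r)).comp_add_right c
    simpa using this
  apply intervalIntegral.integral_mono_ae_restrict hr hint (fLP_intble 0 r)
  filter_upwards [ae_restrict_of_ae ae_ne_zero, ae_restrict_mem measurableSet_Icc]
    with x hx hmem
  have hx0 : 0 < x := lt_of_le_of_ne hmem.1 (Ne.symm hx)
  exact fLP_anti hx0 (by linarith)

/-- On any interval `I = [a, a+s]` of length `s > 0`, the average value of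
`log⁺(|x|⁻¹)` is at most `1 − log(s/2)` if `s < 2`, and at most `2/s` if `s ≥ 2`. -/
theorem average_logPlus_inv_abs_bound (a s : ℝ) (hs : 0 < s) :
    (s < 2 →
      (1 / s) * ∫ x in a..(a + s), max (Real.log |x|⁻¹) 0 ≤ 1 - Real.log (s / 2)) ∧
    (2 ≤ s →
      (1 / s) * ∫ x in a..(a + s), max (Real.log |x|⁻¹) 0 ≤ 2 / s) := by
  have key : ∃ l1 l2 : ℝ, 0 ≤ l1 ∧ 0 ≤ l2 ∧ l1 + l2 = s ∧
      (∫ x in a..(a + s), fLP x) ≤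
        (∫ x in (0:ℝ)..l1, fLP x) + ∫ x in (0:ℝ)..l2, fLP x := by
    rcases le_total 0 a with ha | ha
    · refine ⟨0, s, le_rfl, hs.le, zero_add s, ?_⟩
      rw [intervalIntegral.integral_same, zero_add]
      exact shift ha hs.le
    · rcases le_total (a + s) 0 with hb | hb
      · refine ⟨s, 0, hs.le, le_rfl, add_zero s, ?_⟩
        rw [intervalIntegral.integral_same, add_zero, refl_eq]
        have : -a = -(a + s) + s := by ring
        rw [this]
        exact shift (by linarith) hs.le
      · refine ⟨-a, a + s, neg_nonneg.2 ha, hb, by ring, ?_⟩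
        rw [← intervalIntegral.integral_add_adjacent_intervals
          (fLP_intble a 0) (fLP_intble 0 (a + s))]
        have h1 : ∫ x in a..(0:ℝ), fLP x = ∫ x in (0:ℝ)..(-a), fLP x := by
          have := refl_eq a 0; simpa using this
        rw [h1]
  obtain ⟨l1, l2, h1, h2, hsum, hle⟩ := key
  have hIs : (∫ x in a..(a + s), max (Real.log |x|⁻¹) 0) = ∫ x in a..(a + s), fLP x := rfl
  constructor
  · intro hs2
    set m1 := min l1 1 with hm1def
    set m2 := min l2 1 with hm2def
    have hm1 : 0 ≤ m1 := le_min h1 zero_le_one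
    have hm2 : 0 ≤ m2 := le_min h2 zero_le_one
    have hm1l : m1 ≤ l1 := min_le_left _ _
    have hm2l : m2 ≤ l2 := min_le_left _ _
    have hm11 : m1 ≤ 1 := min_le_right _ _
    have hm21 : m2 ≤ 1 := min_le_right _ _
    have e1 : ∫ x in (0:ℝ)..l1, fLP x = m1 - m1 * Real.log m1 := H_eq_min h1
    have e2 : ∫ x in (0:ℝ)..l2, fLP x = m2 - m2 * Real.log m2 := H_eq_min h2
    have conv := Real.convexOn_mul_log.2 (Set.mem_Ici.2 hm1) (Set.mem_Ici.2 hm2)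
      (by norm_num : (0:ℝ) ≤ 1/2) (by norm_num : (0:ℝ) ≤ 1/2) (by norm_num)
    simp only [smul_eq_mul] at conv
    have hmidnn : 0 ≤ (m1 + m2) / 2 := by linarith
    have hmid1 : (m1 + m2) / 2 ≤ 1 := by linarith
    have hA : ∫ x in (0:ℝ)..((m1 + m2) / 2), fLP x =
        (m1 + m2) / 2 - (m1 + m2) / 2 * Real.log ((m1 + m2) / 2) := H_val hmidnn hmid1
    have hB : ∫ x in (0:ℝ)..(s / 2), fLP x = s / 2 - s / 2 * Real.log (s / 2) :=
      H_val (by linarith) (by linarith)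
    have hmono := H_mono hmidnn (by linarith : (m1 + m2) / 2 ≤ s / 2)
    rw [hA, hB] at hmono
    have hcv : (1/2 * m1 + 1/2 * m2) = (m1 + m2) / 2 := by ring
    rw [hcv] at conv
    have total : (∫ x in a..(a + s), fLP x) ≤ s - s * Real.log (s / 2) := by
      rw [e1, e2] at hle
      nlinarith
    rw [hIs]
    have hs' : (0:ℝ) < 1 / s := by positivity
    calc (1 / s) * ∫ x in a..(a + s), fLP x
        ≤ (1 / s) * (s - s * Real.log (s / 2)) :=
          mul_le_mul_of_nonneg_left total hs'.le
      _ = 1 - Real.log (s / 2) := by field_simp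
  · intro hs2
    have c1 := H_cap h1
    have c2 := H_cap h2
    have total : (∫ x in a..(a + s), fLP x) ≤ 2 := by linarith
    rw [hIs]
    have hs' : (0:ℝ) < 1 / s := by positivity
    calc (1 / s) * ∫ x in a..(a + s), fLP x ≤ (1 / s) * 2 :=
          mul_le_mul_of_nonneg_left total hs'.le
      _ = 2 / s := by ring
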